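/- For every real a with e^{-2π} < a < e^{2π}, a ≠ 1, and every positive real x: Σ_{k=0}^{⌊x⌋} a^k = a^x/log(a) + 1/(1-a) + a^x·Σ_{k=1}^∞ (-1)^k (log(a)^{k-1}/k!)·B_k({x}), and the series on the right converges absolutely. -/

import Mathlib

open Finset

/-- Unsigned Stirling numbers of the first kind. -/
def stirling1 : ℕ → ℕ → ℕ
  | 0, 0 => 1
  | 0, _ + 1 => 0
  | _ + 1, 0 => 0
  | k + 1, l + 1 => stirling1 k l + k * stirling1 k (l + 1)

/-- The Bernoulli polynomial `B_n` evaluated at a real point. -/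
noncomputable def bernoulliPoly (n : ℕ) (x : ℝ) : ℝ :=
  ((Polynomial.bernoulli n).map (algebraMap ℚ ℝ)).eval x

section EulerMaclaurinAux

open Real Nat

lemma bern_num_bound (i : ℕ) : |(bernoulli i : ℝ)| ≤ 4 * (i ! : ℝ) / (2 * π) ^ i := by
  rcases Nat.even_or_odd i with ⟨k, hk⟩ | ⟨k, hk⟩
  · rcases Nat.eq_zero_or_pos k with rfl | hkpos
    · norm_num at hk; subst hk; norm_num
    · have hk0 : k ≠ 0 := hkpos.ne'
      have hik : i = 2 * k := by omega
      subst hik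
      have hZ := hasSum_zeta_nat hk0
      have h1 : (0:ℝ) ≤ (-1 : ℝ) ^ (k + 1) * (2 : ℝ) ^ (2 * k - 1) * π ^ (2 * k) *
          bernoulli (2 * k) / (2 * k)! := by
        rw [← hZ.tsum_eq]
        exact tsum_nonneg fun n => by positivity
      have h2 : (-1 : ℝ) ^ (k + 1) * (2 : ℝ) ^ (2 * k - 1) * π ^ (2 * k) *
          bernoulli (2 * k) / (2 * k)! ≤ 2 := by
        have hle : (-1 : ℝ) ^ (k + 1) * (2 : ℝ) ^ (2 * k - 1) * π ^ (2 * k) *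
            bernoulli (2 * k) / (2 * k)! ≤ π ^ 2 / 6 := by
          rw [← hZ.tsum_eq, ← hasSum_zeta_two.tsum_eq]
          refine Summable.tsum_le_tsum (fun n => ?_) hZ.summable hasSum_zeta_two.summable
          rcases Nat.eq_zero_or_pos n with rfl | hn
          · simp [zero_pow, Nat.mul_ne_zero two_ne_zero hk0]
          · have h1n : (1:ℝ) ≤ (n:ℝ) := by exact_mod_cast hn
            have : (n:ℝ) ^ 2 ≤ (n:ℝ) ^ (2 * k) :=
              pow_le_pow_right₀ h1n (by omega)
            exact one_div_le_one_div_of_le (by positivity) this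
        have hpi : π < 3.15 := pi_lt_d2
        nlinarith [pi_pos]
      have habs : 2 ^ (2 * k - 1) * π ^ (2 * k) * |(bernoulli (2 * k) : ℝ)| / (2 * k)! ≤ 2 := by
        have := abs_of_nonneg h1
        calc 2 ^ (2 * k - 1) * π ^ (2 * k) * |(bernoulli (2 * k) : ℝ)| / (2 * k)!
            = |(-1 : ℝ) ^ (k + 1) * (2 : ℝ) ^ (2 * k - 1) * π ^ (2 * k) *
              bernoulli (2 * k) / (2 * k)!| := by
              rw [abs_div, abs_mul, abs_mul, abs_mul, abs_pow, abs_neg, abs_one, one_pow,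
                one_mul, abs_of_nonneg (by positivity : (0:ℝ) ≤ (2:ℝ) ^ (2*k-1)),
                abs_of_nonneg (by positivity : (0:ℝ) ≤ π ^ (2*k)),
                abs_of_nonneg (by positivity : (0:ℝ) ≤ ((2*k)! : ℝ))]
          _ = _ := this
          _ ≤ 2 := h2
      have hfac : (0:ℝ) < ((2*k)! : ℝ) := by positivity
      have h2pk : ((2:ℝ) * π) ^ (2 * k) = 2 * (2 ^ (2 * k - 1) * π ^ (2 * k)) := by
        have h2 : (2:ℝ) ^ (2 * k) = 2 ^ (2 * k - 1) * 2 := by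
          rw [← pow_succ]; congr 1; omega
        rw [mul_pow, h2]; ring
      rw [div_le_iff₀ hfac] at habs
      rw [le_div_iff₀ (by positivity : (0:ℝ) < ((2:ℝ)*π)^(2*k)), h2pk]
      nlinarith [abs_nonneg ((bernoulli (2*k) : ℝ))]
  · rcases Nat.eq_zero_or_pos k with rfl | hkpos
    · norm_num at hk; subst hk
      simp only [bernoulli_one]
      have h4 : π ≤ 4 := pi_le_four
      rw [le_div_iff₀ (by positivity : (0:ℝ) < (2*π)^1)]
      push_cast
      rw [abs_div, abs_neg, abs_one, abs_two]
      simp [Nat.factorial]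
      nlinarith [pi_pos]
    · have hne : i ≠ 1 := by omega
      have hodd : Odd i := ⟨k, hk⟩
      rw [bernoulli_eq_bernoulli'_of_ne_one hne,
        bernoulli'_eq_zero_of_odd hodd (by omega)]
      simp
      positivity

lemma bernoulliPoly_eq (n : ℕ) (y : ℝ) : bernoulliPoly n y =
    ∑ i ∈ range (n + 1), (bernoulli i : ℝ) * (n.choose i : ℝ) * y ^ (n - i) := by
  simp [bernoulliPoly, Polynomial.bernoulli, Polynomial.map_sum, Polynomial.eval_finset_sum]

lemma bernoulliPoly_bound (n : ℕ) (y : ℝ) (hy0 : 0 ≤ y) (hy1 : y ≤ 1) :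
    |bernoulliPoly n y| ≤ 4 * Real.exp (2 * π) * (n ! : ℝ) / (2 * π) ^ n := by
  have hπ : (0:ℝ) < 2 * π := by positivity
  rw [bernoulliPoly_eq]
  calc |∑ i ∈ range (n + 1), (bernoulli i : ℝ) * (n.choose i : ℝ) * y ^ (n - i)|
      ≤ ∑ i ∈ range (n + 1), |(bernoulli i : ℝ) * (n.choose i : ℝ) * y ^ (n - i)| :=
        Finset.abs_sum_le_sum_abs _ _
    _ ≤ ∑ i ∈ range (n + 1), 4 * (n ! : ℝ) * (2*π) ^ (n - i) / (((n-i)! : ℝ) * (2*π) ^ n) := by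
        refine Finset.sum_le_sum fun i hi => ?_
        have hin : i ≤ n := by simpa [Nat.lt_succ_iff] using hi
        have hcf : (n.choose i : ℝ) * (i ! : ℝ) * ((n-i)! : ℝ) = (n ! : ℝ) := by
          exact_mod_cast congrArg (Nat.cast : ℕ → ℝ)
            (Nat.choose_mul_factorial_mul_factorial hin)
        have hpow : ((2:ℝ)*π) ^ i * ((2:ℝ)*π) ^ (n-i) = ((2:ℝ)*π) ^ n := by
          rw [← pow_add]; congr 1; omega
        have h1 : |(bernoulli i : ℝ) * (n.choose i : ℝ) * y ^ (n - i)|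
            ≤ (4 * (i ! : ℝ) / (2*π) ^ i) * (n.choose i : ℝ) := by
          rw [abs_mul, abs_mul]
          have hy : |y ^ (n-i)| ≤ 1 := by
            rw [abs_pow, abs_of_nonneg hy0]; exact pow_le_one₀ hy0 hy1
          have := bern_num_bound i
          have hc : (0:ℝ) ≤ (n.choose i : ℝ) := Nat.cast_nonneg _
          calc |(bernoulli i : ℝ)| * |(n.choose i : ℝ)| * |y ^ (n - i)|
              ≤ |(bernoulli i : ℝ)| * |(n.choose i : ℝ)| * 1 := by
                apply mul_le_mul_of_nonneg_left hy (by positivity)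
            _ = |(bernoulli i : ℝ)| * (n.choose i : ℝ) := by
                rw [mul_one, abs_of_nonneg hc]
            _ ≤ (4 * (i ! : ℝ) / (2*π) ^ i) * (n.choose i : ℝ) :=
                mul_le_mul_of_nonneg_right this hc
        refine h1.trans (le_of_eq ?_)
        have hfi : (0:ℝ) < (i ! : ℝ) := by positivity
        have hfni : (0:ℝ) < ((n-i)! : ℝ) := by positivity
        field_simp
        rw [← hcf, ← hpow]
        ring
    _ = 4 * (n ! : ℝ) / (2*π) ^ n * ∑ i ∈ range (n + 1), (2*π) ^ (n - i) / ((n-i)! : ℝ) := by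
        rw [Finset.mul_sum]
        refine Finset.sum_congr rfl fun i hi => ?_
        field_simp
    _ = 4 * (n ! : ℝ) / (2*π) ^ n * ∑ j ∈ range (n + 1), (2*π) ^ j / (j ! : ℝ) := by
        congr 1
        exact Finset.sum_range_reflect (fun j => (2*π) ^ j / (j ! : ℝ)) (n+1)
    _ ≤ 4 * (n ! : ℝ) / (2*π) ^ n * Real.exp (2*π) := by
        apply mul_le_mul_of_nonneg_left (Real.sum_le_exp_of_nonneg hπ.le _) (by positivity)
    _ = 4 * Real.exp (2 * π) * (n ! : ℝ) / (2 * π) ^ n := by ring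

lemma sum_choose_bernoulliPoly (n : ℕ) (y : ℝ) :
    ∑ k ∈ range (n + 1), ((n+1).choose k : ℝ) * bernoulliPoly k y = (n+1) * y ^ n := by
  have h := congrArg (Polynomial.aeval (y : ℝ)) (Polynomial.sum_bernoulli n)
  simp only [map_sum, Polynomial.aeval_monomial, map_smul] at h
  simp only [bernoulliPoly, Polynomial.eval_map, ← Polynomial.aeval_def]
  rw [show ((n:ℝ)+1) * y ^ n = (algebraMap ℚ ℝ) ((n:ℚ) + 1) * y ^ n by push_cast; ring, ← h]
  refine Finset.sum_congr rfl fun k hk => ?_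
  rw [Rat.smul_def]; push_cast; ring

lemma summable_abs_bernoulliPoly (t y : ℝ) (ht : |t| < 2 * π) (hy0 : 0 ≤ y) (hy1 : y ≤ 1) :
    Summable fun n : ℕ => |bernoulliPoly n y * t ^ n / (n ! : ℝ)| := by
  have hπ : (0:ℝ) < 2 * π := by positivity
  have hr0 : (0:ℝ) ≤ |t| / (2*π) := by positivity
  have hr1 : |t| / (2*π) < 1 := (div_lt_one hπ).mpr ht
  refine Summable.of_nonneg_of_le (fun n => abs_nonneg _)
    (fun n => ?_) (((summable_geometric_of_lt_one hr0 hr1).mul_left (4 * Real.exp (2*π))))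
  have hfac : (0:ℝ) < (n ! : ℝ) := by positivity
  calc |bernoulliPoly n y * t ^ n / (n ! : ℝ)|
      = |bernoulliPoly n y| * |t| ^ n / (n ! : ℝ) := by
        rw [abs_div, abs_mul, abs_pow, abs_of_nonneg hfac.le]
    _ ≤ (4 * Real.exp (2 * π) * (n ! : ℝ) / (2 * π) ^ n) * |t| ^ n / (n ! : ℝ) := by
        gcongr
        exact bernoulliPoly_bound n y hy0 hy1
    _ = 4 * Real.exp (2*π) * (|t| / (2*π)) ^ n := by
        rw [div_pow]
        field_simp
lemma hasSum_bernoulliPoly (t y : ℝ) (ht0 : t ≠ 0) (ht : |t| < 2 * π)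
    (hy0 : 0 ≤ y) (hy1 : y ≤ 1) :
    HasSum (fun n : ℕ => bernoulliPoly n y * t ^ n / (n ! : ℝ))
      (t * Real.exp (y * t) / (Real.exp t - 1)) := by
  set f : ℕ → ℝ := fun n => bernoulliPoly n y * t ^ n / (n ! : ℝ) with hfdef
  have hfabs : Summable fun n => ‖f n‖ := by
    simpa [Real.norm_eq_abs] using summable_abs_bernoulliPoly t y ht hy0 hy1
  have hf : Summable f := hfabs.of_norm
  set g : ℕ → ℝ := fun n => if n = 0 then 0 else t ^ n / (n ! : ℝ) with hgdef
  have hgexp : HasSum (fun n : ℕ => t ^ n / (n ! : ℝ)) (Real.exp t) := by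
    rw [Real.exp_eq_exp_ℝ]; exact NormedSpace.expSeries_div_hasSum_exp t
  have hg : HasSum g (Real.exp t - 1) := by
    have h0 : HasSum (fun n : ℕ => if n = 0 then (1:ℝ) else 0) 1 := hasSum_ite_eq 0 1
    have heq : (fun n : ℕ => t ^ n / (n ! : ℝ) - (if n = 0 then (1:ℝ) else 0)) = g := by
      funext n; by_cases h : n = 0 <;> simp [hgdef, h, Nat.factorial]
    exact heq ▸ (hgexp.sub h0)
  have hgabs : Summable fun n => ‖g n‖ := by
    refine Summable.of_nonneg_of_le (fun n => norm_nonneg _) (fun n => ?_)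
      (Real.summable_pow_div_factorial |t|)
    by_cases h : n = 0
    · simp [hgdef, h]
    · simp only [hgdef, h, if_false, Real.norm_eq_abs, abs_div, abs_pow]
      rw [abs_of_nonneg (by positivity : (0:ℝ) ≤ (n ! : ℝ))]
  have hprod := tsum_mul_tsum_eq_tsum_sum_range_of_summable_norm hfabs hgabs
  set d : ℕ → ℝ := fun n => if n = 0 then 0 else t ^ n * y ^ (n-1) / ((n-1)! : ℝ) with hddef
  have hc : ∀ n, ∑ k ∈ range (n + 1), f k * g (n - k) = d n := by
    intro n
    cases n with
    | zero => simp [hfdef, hgdef, hddef]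
    | succ n =>
      rw [Finset.sum_range_succ]
      have hlast : f (n+1) * g (n + 1 - (n+1)) = 0 := by simp [hgdef]
      rw [hlast, add_zero]
      have hterm : ∀ k ∈ range (n+1), f k * g (n + 1 - k)
          = ((n+1).choose k : ℝ) * bernoulliPoly k y * (t ^ (n+1) / ((n+1)! : ℝ)) := by
        intro k hk
        have hkn : k ≤ n := by simpa [Nat.lt_succ_iff] using hk
        have hne2 : n + 1 - k ≠ 0 := by omega
        simp only [hfdef, hgdef, if_neg hne2]
        have hpow : t ^ k * t ^ (n+1-k) = t ^ (n+1) := by rw [← pow_add]; congr 1; omega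
        have hcf : ((n+1).choose k : ℝ) * (k ! : ℝ) * ((n+1-k)! : ℝ) = ((n+1)! : ℝ) := by
          exact_mod_cast congrArg (Nat.cast : ℕ → ℝ)
            (Nat.choose_mul_factorial_mul_factorial (by omega : k ≤ n+1))
        field_simp
        rw [← hcf, ← hpow]
        ring
      rw [Finset.sum_congr rfl hterm, ← Finset.sum_mul, sum_choose_bernoulliPoly n y]
      simp only [hddef, Nat.succ_ne_zero, if_neg, if_false, Nat.add_sub_cancel]
      have hfs : ((n+1)! : ℝ) = ((n:ℝ)+1) * (n ! : ℝ) := by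
        exact_mod_cast congrArg (Nat.cast : ℕ → ℝ) (Nat.factorial_succ n)
      have hnf : (n ! : ℝ) ≠ 0 := by positivity
      have hnf1 : ((n+1)! : ℝ) ≠ 0 := by positivity
      field_simp [hfs]
      rw [hfs]
      ring
  have hd : HasSum d (t * Real.exp (y * t)) := by
    have h1 : HasSum (fun n : ℕ => (y*t) ^ n / (n ! : ℝ)) (Real.exp (y*t)) := by
      rw [Real.exp_eq_exp_ℝ]; exact NormedSpace.expSeries_div_hasSum_exp (y*t)
    have h2 := h1.mul_left t
    have h3 : (fun n : ℕ => d (n + 1)) = fun n => t * ((y*t) ^ n / (n ! : ℝ)) := by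
      funext n
      simp only [hddef, Nat.succ_ne_zero, if_neg, if_false, Nat.add_sub_cancel]
      rw [pow_succ, mul_pow]
      field_simp
    have h4 : HasSum (fun n : ℕ => d (n + 1)) (t * Real.exp (y*t)) := by rw [h3]; exact h2
    have := (hasSum_nat_add_iff 1).mp h4
    simpa [hddef] using this
  have htsum : (∑' n, f n) * (Real.exp t - 1) = t * Real.exp (y * t) := by
    calc (∑' n, f n) * (Real.exp t - 1) = (∑' n, f n) * (∑' n, g n) := by rw [hg.tsum_eq]
      _ = ∑' n, ∑ k ∈ range (n+1), f k * g (n-k) := hprod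
      _ = ∑' n, d n := tsum_congr hc
      _ = t * Real.exp (y*t) := hd.tsum_eq
  have hne : Real.exp t - 1 ≠ 0 := by
    refine sub_ne_zero.mpr fun h => ht0 ?_
    have : Real.exp t = Real.exp 0 := by rw [h, Real.exp_zero]
    exact Real.exp_injective this
  have hval : ∑' n, f n = t * Real.exp (y*t) / (Real.exp t - 1) := by
    rw [eq_div_iff hne]; exact htsum
  exact hval ▸ hf.hasSum

/-- The Euler–Maclaurin geometric summation formula. -/
theorem euler_maclaurin_geometric (a : ℝ) (ha₀ : Real.exp (-(2 * Real.pi)) < a)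
    (ha₁ : a < Real.exp (2 * Real.pi)) (ha₂ : a ≠ 1) (x : ℝ) (hx : 0 < x) :
    (Summable fun k : ℕ =>
      |a ^ x * ((-1 : ℝ) ^ (k + 1) * Real.log a ^ k / Nat.factorial (k + 1) *
        bernoulliPoly (k + 1) (Int.fract x))|) ∧
    HasSum (fun k : ℕ =>
        a ^ x * ((-1 : ℝ) ^ (k + 1) * Real.log a ^ k / Nat.factorial (k + 1) *
          bernoulliPoly (k + 1) (Int.fract x)))
      ((∑ k ∈ Finset.range (Nat.floor x + 1), a ^ k)
        - a ^ x / Real.log a - 1 / (1 - a)) := by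
  have ha : (0:ℝ) < a := lt_trans (Real.exp_pos _) ha₀
  set L := Real.log a with hLdef
  have hL0 : L ≠ 0 := Real.log_ne_zero_of_pos_of_ne_one ha ha₂
  have hLub : L < 2 * π := by
    have := Real.log_lt_log ha ha₁
    rwa [Real.log_exp] at this
  have hLlb : -(2 * π) < L := by
    have := Real.log_lt_log (Real.exp_pos _) ha₀
    rwa [Real.log_exp] at this
  set t := -L with htdef
  have ht0 : t ≠ 0 := neg_ne_zero.mpr hL0
  have ht : |t| < 2 * π := by rw [abs_neg, abs_lt]; exact ⟨hLlb, hLub⟩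
  set y := Int.fract x with hydef
  have hy0 : 0 ≤ y := Int.fract_nonneg x
  have hy1 : y ≤ 1 := (Int.fract_lt_one x).le
  set n₀ := Nat.floor x with hn₀
  set C₀ : ℝ := a ^ x / L with hC₀
  -- pointwise identity
  have hfun : ∀ k : ℕ,
      C₀ * (bernoulliPoly (k+1) y * t ^ (k+1) / ((k+1)! : ℝ)) =
      a ^ x * ((-1 : ℝ) ^ (k + 1) * L ^ k / ((k+1)! : ℝ) * bernoulliPoly (k + 1) y) := by
    intro k
    have hfac : ((k+1)! : ℝ) ≠ 0 := by positivity
    rw [htdef, neg_pow, pow_succ]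
    rw [hC₀]
    field_simp
    rw [pow_succ]
    ring
  -- summability of absolute values
  have hsum_abs := summable_abs_bernoulliPoly t y ht hy0 hy1
  have hsum_abs' : Summable fun k : ℕ =>
      |bernoulliPoly (k+1) y * t ^ (k+1) / ((k+1)! : ℝ)| :=
    hsum_abs.comp_injective (add_left_injective 1) |>.congr (fun k => rfl)
  constructor
  · refine ((hsum_abs'.mul_left |C₀|).congr fun k => ?_)
    rw [← abs_mul, hfun k]
  · -- the HasSum statement
    have H := hasSum_bernoulliPoly t y ht0 ht hy0 hy1
    have hf0 : bernoulliPoly 0 y * t ^ 0 / ((0)! : ℝ) = 1 := by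
      simp [bernoulliPoly]
    have H1 : HasSum (fun k : ℕ => bernoulliPoly (k+1) y * t ^ (k+1) / ((k+1)! : ℝ))
        (t * Real.exp (y * t) / (Real.exp t - 1) - 1) := by
      refine (hasSum_nat_add_iff (f := fun n : ℕ => bernoulliPoly n y * t ^ n / (n ! : ℝ)) 1).mpr ?_
      rw [Finset.range_one, Finset.sum_singleton, hf0, sub_add_cancel]
      exact H
    have H2 := H1.mul_left C₀
    -- exp values
    have he_t : Real.exp t = a⁻¹ := by rw [htdef, Real.exp_neg, Real.exp_log ha]
    have he_yt : Real.exp (y * t) = a ^ (-y) := by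
      rw [Real.rpow_def_of_pos ha]; congr 1; rw [htdef]; ring
    have hX : (0:ℝ) < a ^ x := Real.rpow_pos_of_pos ha x
    have hfloor : ((n₀ : ℝ)) = x - y := by
      rw [hydef, Int.self_sub_fract, hn₀]
      exact_mod_cast natCast_floor_eq_intCast_floor hx.le
    have hpow : a ^ x * a ^ (-y) = (a:ℝ) ^ n₀ := by
      rw [← Real.rpow_add ha, ← Real.rpow_natCast a n₀]
      congr 1
      linarith [hfloor]
    have hY : a ^ (-y) = (a:ℝ) ^ n₀ / a ^ x := by
      rw [eq_div_iff hX.ne']; rw [← hpow]; ring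
    have ha1 : a - 1 ≠ 0 := sub_ne_zero.mpr ha₂
    have h1a : (1:ℝ) - a ≠ 0 := sub_ne_zero.mpr (Ne.symm ha₂)
    have hainv : a⁻¹ - 1 ≠ 0 := by
      refine sub_ne_zero.mpr fun h => ha₂ ?_
      rw [inv_eq_one] at h; exact h
    have hval : C₀ * (t * Real.exp (y * t) / (Real.exp t - 1) - 1)
        = (∑ k ∈ Finset.range (n₀ + 1), a ^ k) - a ^ x / L - 1 / (1 - a) := by
      rw [he_t, he_yt, hY, geom_sum_eq ha₂, htdef, hC₀, pow_succ]
      field_simp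
      ring
    have hfe : (fun k : ℕ => C₀ * (bernoulliPoly (k+1) y * t ^ (k+1) / ((k+1)! : ℝ)))
        = fun k : ℕ => a ^ x * ((-1 : ℝ) ^ (k + 1) * L ^ k / ((k+1)! : ℝ) *
            bernoulliPoly (k + 1) y) := funext hfun
    rw [hfe, hval] at H2
    exact H2

end EulerMaclaurinAux
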